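/- Let r > 1, let m be a positive integer, let σ be a positive integer, and define π_k = (1 − r^(−(m−k)/σ)) / (1 − r^(−m/σ)) for integers 0 ≤ k ≤ m. Then for any 0 < k < m and any integers b, p with 1 ≤ b ≤ σ, 1 ≤ p ≤ σ, b ≤ k, p ≤ m − k, we have π_k ≤ π_{k+p} · b/(b + r·p) + π_{k−b} · (r·p)/(b + r·p). -/

import Mathlib

set_option maxHeartbeats 1000000 in



theorem stmt_2 (r : ℝ) (hr : 1 < r) (m σ : ℕ) (hm : 1 ≤ m) (hσ : 1 ≤ σ)
    (π : ℕ → ℝ)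
    (hπ : ∀ k : ℕ, k ≤ m →
      π k = (1 - r ^ (-(((m : ℝ) - k) / σ))) / (1 - r ^ (-((m : ℝ) / σ))))
    (k b p : ℕ) (hk0 : 0 < k) (hkm : k < m)
    (hb1 : 1 ≤ b) (hbσ : b ≤ σ) (hp1 : 1 ≤ p) (hpσ : p ≤ σ)
    (hbk : b ≤ k) (hpm : p ≤ m - k) :
    π k ≤ π (k + p) * ((b : ℝ) / ((b : ℝ) + r * p)) +
      π (k - b) * ((r * p) / ((b : ℝ) + r * p)) := by
  have hr0 : (0:ℝ) < r := lt_trans one_pos hr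
  have hσ0 : (0:ℝ) < (σ:ℕ) := by exact_mod_cast hσ
  have hb0 : (0:ℝ) < (b:ℕ) := by exact_mod_cast hb1
  have hp0 : (0:ℝ) < (p:ℕ) := by exact_mod_cast hp1
  have hm0 : (0:ℝ) < (m:ℕ) := by exact_mod_cast hm
  -- Bernoulli-type bounds
  set ap : ℝ := (p:ℝ)/σ with hap
  set ab : ℝ := (b:ℝ)/σ with hab
  have hap0 : 0 ≤ ap := by positivity
  have hap1 : ap ≤ 1 := by
    rw [hap, div_le_one hσ0]; exact_mod_cast hpσ
  have hab0 : 0 ≤ ab := by positivity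
  have hab1 : ab ≤ 1 := by
    rw [hab, div_le_one hσ0]; exact_mod_cast hbσ
  have hu : r ^ ap ≤ 1 + ap * (r - 1) := by
    have := rpow_one_add_le_one_add_mul_self (s := r - 1)
      (by linarith : (-1:ℝ) ≤ r - 1) hap0 hap1
    simpa using this
  have hv : r ^ (-ab) ≤ 1 + ab * (r⁻¹ - 1) := by
    have h1 : r ^ (-ab) = (r⁻¹) ^ ab := by
      rw [Real.rpow_neg hr0.le, ← Real.inv_rpow hr0.le]
    have h2 : (r⁻¹) ^ ab = (1 + (r⁻¹ - 1)) ^ ab := by norm_num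
    have := rpow_one_add_le_one_add_mul_self (s := r⁻¹ - 1)
      (by have h0 : 0 ≤ r⁻¹ := by positivity
          linarith) hab0 hab1
    rw [h1, h2]; exact this
  -- core inequality
  have hrinv : r * (1 + ab * (r⁻¹ - 1)) = r - ab * (r - 1) := by
    field_simp; ring
  have core : (b:ℝ) * r ^ ap + r * (p:ℝ) * r ^ (-ab) ≤ (b:ℝ) + r * p := by
    have h1 : (b:ℝ) * r ^ ap ≤ b + (b:ℝ) * ap * (r - 1) := by nlinarith
    have h2 : r * (p:ℝ) * r ^ (-ab) ≤ (p:ℝ) * (r - ab * (r - 1)) := by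
      have := mul_le_mul_of_nonneg_left hv (le_of_lt hr0)
      rw [hrinv] at this
      nlinarith
    have h3 : (b:ℝ) * ap = (p:ℝ) * ab := by
      rw [hap, hab]; field_simp
    nlinarith
  -- denominator
  have hD : 0 < 1 - r ^ (-((m:ℝ)/σ)) := by
    have hpos : (0:ℝ) < (m:ℝ)/σ := by positivity
    have : r ^ (-((m:ℝ)/σ)) < 1 :=
      Real.rpow_lt_one_of_one_lt_of_neg hr (by linarith)
    linarith
  set A : ℝ := r ^ (-(((m:ℝ) - k) / σ)) with hA
  have hA0 : 0 < A := Real.rpow_pos_of_pos hr0 _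
  have hkpm : k + p ≤ m := by omega
  have hkbm : k - b ≤ m := by omega
  have hcastkp : ((m:ℝ) - ((k + p : ℕ) : ℝ)) / σ = ((m:ℝ) - k) / σ - ap := by
    push_cast; rw [hap]; ring
  have hcastkb : ((m:ℝ) - ((k - b : ℕ) : ℝ)) / σ = ((m:ℝ) - k) / σ + ab := by
    have : ((k - b : ℕ) : ℝ) = (k:ℝ) - b := by
      have := Nat.cast_sub hbk (R := ℝ); push_cast at this ⊢; linarith
    rw [this, hab]; ring
  have hB : r ^ (-(((m:ℝ) - ((k + p : ℕ) : ℝ)) / σ)) = A * r ^ ap := by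
    rw [hcastkp, neg_sub', sub_neg_eq_add, Real.rpow_add hr0, hA]
  have hC : r ^ (-(((m:ℝ) - ((k - b : ℕ) : ℝ)) / σ)) = A * r ^ (-ab) := by
    rw [hcastkb, neg_add, Real.rpow_add hr0, hA]
  rw [hπ k (le_of_lt hkm), hπ (k + p) hkpm, hπ (k - b) hkbm, hB, hC]
  set D : ℝ := 1 - r ^ (-((m:ℝ)/σ))
  set S : ℝ := (b:ℝ) + r * p with hS
  have hS0 : 0 < S := by positivity
  rw [div_mul_eq_mul_div, div_mul_eq_mul_div, ← add_div, div_le_div_iff_of_pos_right hD,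
    ← hA]
  have e : (1 - A * r ^ ap) * ((b:ℝ) / S) + (1 - A * r ^ (-ab)) * (r * (p:ℝ) / S)
      = ((1 - A * r ^ ap) * b + (1 - A * r ^ (-ab)) * (r * p)) / S := by
    field_simp
  rw [e, le_div_iff₀ hS0]
  have hcA := mul_le_mul_of_nonneg_left core hA0.le
  nlinarith [hcA]
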